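/- Let H ∈ {0,1}^{m×n} and γ ∈ ℝ^n with γ_i ≠ 0 for all i. Let C be a finite set of pairs (j,V) where j is a row index of H and V ⊆ N(j) has odd cardinality, and suppose u* is the unique minimizer of γᵀu over the set of u satisfying the initial box constraints determined by γ together with the parity inequality associated with (j,V) for every (j,V) ∈ C. Let J = {j : some (j,V) ∈ C is active at u*}, and let H_J be the submatrix of H consisting of the rows in J. Then u* is the unique minimizer of γᵀu over the fundamental polytope P(H_J). -/

import Mathlib

/-- Support of row `j` of a binary matrix `H`. -/
def supp {m n : ℕ} (H : Fin m → Fin n → Bool) (j : Fin m) : Finset (Fin n) :=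
  Finset.univ.filter (fun i => H j i)

/-- Left-hand side of the parity inequality associated with `(j, V)` at `u`. -/
def LHS {m n : ℕ} (H : Fin m → Fin n → Bool) (j : Fin m) (V : Finset (Fin n))
    (u : Fin n → ℝ) : ℝ :=
  ∑ i ∈ V, (1 - u i) + ∑ i ∈ supp H j \ V, u i

/-- The feasible set of an (M)ALP subproblem: initial box constraints
determined by `γ`, together with the parity inequalities of the pairs in `C`. -/
def feasible {m n : ℕ} (H : Fin m → Fin n → Bool) (γ : Fin n → ℝ)
    (C : Finset (Fin m × Finset (Fin n))) : Set (Fin n → ℝ) :=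
  {u | (∀ i, (0 ≤ γ i → 0 ≤ u i) ∧ (γ i < 0 → u i ≤ 1)) ∧
    ∀ p ∈ C, 1 ≤ LHS H p.1 p.2 u}

/-- The fundamental polytope of the submatrix of `H` given by the rows in `J`:
all `u ∈ [0,1]^n` satisfying every parity inequality of every row in `J`. -/
def fundamentalPolytopeRows {m n : ℕ} (H : Fin m → Fin n → Bool)
    (J : Set (Fin m)) : Set (Fin n → ℝ) :=
  {u | (∀ i, 0 ≤ u i ∧ u i ≤ 1) ∧
    ∀ j ∈ J, ∀ V : Finset (Fin n), V ⊆ supp H j → Odd V.card → 1 ≤ LHS H j V u}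

lemma LHS_nonneg {m n : ℕ} (H : Fin m → Fin n → Bool) (j : Fin m) (V : Finset (Fin n))
    (u : Fin n → ℝ) (hu : ∀ i, 0 ≤ u i ∧ u i ≤ 1) : 0 ≤ LHS H j V u := by
  unfold LHS
  have h1 : (0:ℝ) ≤ ∑ i ∈ V, (1 - u i) :=
    Finset.sum_nonneg fun i _ => by linarith [(hu i).2]
  have h2 : (0:ℝ) ≤ ∑ i ∈ supp H j \ V, u i :=
    Finset.sum_nonneg fun i _ => (hu i).1
  linarith

lemma LHS_affine {m n : ℕ} (H : Fin m → Fin n → Bool) (j : Fin m) (V : Finset (Fin n))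
    (u v : Fin n → ℝ) (a b : ℝ) (hab : a + b = 1) :
    LHS H j V (fun i => a * u i + b * v i) = a * LHS H j V u + b * LHS H j V v := by
  unfold LHS
  beta_reduce
  have h1 : ∑ i ∈ V, (1 - (a * u i + b * v i)) = ∑ i ∈ V, (a * (1 - u i) + b * (1 - v i)) :=
    Finset.sum_congr rfl fun i _ => by linear_combination -hab
  rw [h1, Finset.sum_add_distrib, Finset.sum_add_distrib, ← Finset.mul_sum, ← Finset.mul_sum,
    ← Finset.mul_sum, ← Finset.mul_sum]
  ring

lemma LHS_eq {m n : ℕ} (H : Fin m → Fin n → Bool) (j : Fin m) (V : Finset (Fin n))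
    (hV : V ⊆ supp H j) (u : Fin n → ℝ) :
    LHS H j V u = ∑ i ∈ supp H j, (if i ∈ V then 1 - u i else u i) := by
  rw [LHS, ← Finset.sum_sdiff hV, add_comm]
  congr 1
  · exact Finset.sum_congr rfl fun i hi => (if_neg (Finset.mem_sdiff.mp hi).2).symm
  · exact Finset.sum_congr rfl fun i hi => (if_pos hi).symm

lemma key {m n : ℕ} (H : Fin m → Fin n → Bool) (j : Fin m) (V₀ V : Finset (Fin n))
    (u : Fin n → ℝ) (hu : ∀ i, 0 ≤ u i ∧ u i ≤ 1)
    (h0 : V₀ ⊆ supp H j) (h1 : V ⊆ supp H j)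
    (hodd0 : Odd V₀.card) (hodd : Odd V.card) (hne : V ≠ V₀) :
    2 ≤ LHS H j V₀ u + LHS H j V u := by
  rw [LHS_eq H j V₀ h0 u, LHS_eq H j V h1 u, ← Finset.sum_add_distrib]
  set g : Fin n → ℝ := fun i => (if i ∈ V₀ then 1 - u i else u i) + (if i ∈ V then 1 - u i else u i) with hg
  set D : Finset (Fin n) := (V₀ \ V) ∪ (V \ V₀) with hD
  have hDsub : D ⊆ supp H j :=
    Finset.union_subset (le_trans (Finset.sdiff_subset) h0) (le_trans (Finset.sdiff_subset) h1)
  have hg1 : ∀ i ∈ D, g i = 1 := by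
    intro i hi
    rcases Finset.mem_union.mp hi with h | h
    · obtain ⟨hi0, hiV⟩ := Finset.mem_sdiff.mp h
      simp only [hg]; rw [if_pos hi0, if_neg hiV]; ring
    · obtain ⟨hiV, hi0⟩ := Finset.mem_sdiff.mp h
      simp only [hg]; rw [if_neg hi0, if_pos hiV]; ring
  have hgnn : ∀ i ∈ supp H j, i ∉ D → 0 ≤ g i := by
    intro i _ _
    simp only [hg]
    have := hu i
    split <;> split <;> linarith [this.1, this.2]
  have hsum : ∑ i ∈ D, g i ≤ ∑ i ∈ supp H j, g i :=
    Finset.sum_le_sum_of_subset_of_nonneg hDsub hgnn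
  have hsumD : ∑ i ∈ D, g i = (D.card : ℝ) := by
    rw [Finset.sum_congr rfl hg1]; simp
  have hcard : 2 ≤ D.card := by
    have hdisj : Disjoint (V₀ \ V) (V \ V₀) := disjoint_sdiff_sdiff
    have hc : D.card = (V₀ \ V).card + (V \ V₀).card := Finset.card_union_of_disjoint hdisj
    have e0 : (V₀ \ V).card + (V₀ ∩ V).card = V₀.card := Finset.card_sdiff_add_card_inter V₀ V
    have e1 : (V \ V₀).card + (V ∩ V₀).card = V.card := Finset.card_sdiff_add_card_inter V V₀
    have e2 : (V₀ ∩ V).card = (V ∩ V₀).card := by rw [Finset.inter_comm]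
    have hne' : D.card ≠ 0 := by
      intro h
      apply hne
      have hDe : D = ∅ := Finset.card_eq_zero.mp h
      have := Finset.union_eq_empty.mp hDe
      exact Finset.Subset.antisymm (Finset.sdiff_eq_empty_iff_subset.mp this.2)
        (Finset.sdiff_eq_empty_iff_subset.mp this.1)
    obtain ⟨k0, hk0⟩ := hodd0
    obtain ⟨k1, hk1⟩ := hodd
    omega
  calc (2:ℝ) ≤ (D.card : ℝ) := by exact_mod_cast hcard
    _ = ∑ i ∈ D, g i := hsumD.symm
    _ ≤ _ := hsum

/-- the unique minimizer `u*` of an (M)ALP subproblem is also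
the unique minimizer of `γᵀu` over the fundamental polytope of the submatrix
`H_J` of `H` consisting of the rows that have a parity inequality in the
subproblem that is active at `u*`. -/
theorem stmt_11 (m n : ℕ) (H : Fin m → Fin n → Bool) (γ : Fin n → ℝ)
    (hγ : ∀ i, γ i ≠ 0)
    (C : Finset (Fin m × Finset (Fin n)))
    (hC : ∀ p ∈ C, p.2 ⊆ supp H p.1 ∧ Odd p.2.card)
    (ustar : Fin n → ℝ) (hfeas : ustar ∈ feasible H γ C)
    (huniq : ∀ v ∈ feasible H γ C, v ≠ ustar →
      ∑ i, γ i * ustar i < ∑ i, γ i * v i)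
    (J : Set (Fin m))
    (hJ : J = {j | ∃ V, (j, V) ∈ C ∧ LHS H j V ustar = 1}) :
    ustar ∈ fundamentalPolytopeRows H J ∧
      ∀ v ∈ fundamentalPolytopeRows H J, v ≠ ustar →
        ∑ i, γ i * ustar i < ∑ i, γ i * v i := by
  obtain ⟨hbox0, hpar0⟩ := hfeas
  -- Step A: ustar ∈ [0,1]^n, via clamping
  set w : Fin n → ℝ := fun i => max 0 (min 1 (ustar i)) with hw
  have hw01 : ∀ i, 0 ≤ w i ∧ w i ≤ 1 := fun i =>
    ⟨le_max_left _ _, max_le (by norm_num) (min_le_left _ _)⟩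
  have hwfeas : w ∈ feasible H γ C := by
    constructor
    · exact fun i => ⟨fun _ => (hw01 i).1, fun _ => (hw01 i).2⟩
    · intro p hp
      obtain ⟨hsub, hodd⟩ := hC p hp
      have h1 := hpar0 p hp
      by_cases hcase : (∃ i ∈ p.2, ustar i < 0) ∨ (∃ i ∈ supp H p.1 \ p.2, 1 < ustar i)
      · unfold LHS
        rcases hcase with ⟨i0, hi0, hlt⟩ | ⟨i0, hi0, hgt⟩
        · have hterm : w i0 = 0 := by
            simp only [hw]
            rw [min_eq_right (by linarith), max_eq_left (le_of_lt hlt)]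
          have hA : (1:ℝ) - w i0 ≤ ∑ i ∈ p.2, (1 - w i) := by
            have h := Finset.single_le_sum (f := fun i => 1 - w i)
              (fun i _ => by show (0:ℝ) ≤ 1 - w i; linarith [(hw01 i).2]) hi0
            simpa using h
          have hB : (0:ℝ) ≤ ∑ i ∈ supp H p.1 \ p.2, w i :=
            Finset.sum_nonneg fun i _ => (hw01 i).1
          rw [hterm] at hA
          linarith
        · have hterm : w i0 = 1 := by
            simp only [hw]
            rw [min_eq_left (le_of_lt hgt), max_eq_right (by norm_num)]
          have hA : (0:ℝ) ≤ ∑ i ∈ p.2, (1 - w i) :=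
            Finset.sum_nonneg fun i _ => by linarith [(hw01 i).2]
          have hB : w i0 ≤ ∑ i ∈ supp H p.1 \ p.2, w i := by
            have h := Finset.single_le_sum (f := fun i => w i)
              (fun i _ => (hw01 i).1) hi0
            simpa using h
          rw [hterm] at hB
          linarith
      · push_neg at hcase
        obtain ⟨hc1, hc2⟩ := hcase
        have hA : ∑ i ∈ p.2, (1 - ustar i) ≤ ∑ i ∈ p.2, (1 - w i) := by
          apply Finset.sum_le_sum
          intro i hi
          have : w i ≤ ustar i := by
            simp only [hw]
            exact max_le (hc1 i hi) (min_le_right _ _)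
          linarith
        have hB : ∑ i ∈ supp H p.1 \ p.2, ustar i ≤ ∑ i ∈ supp H p.1 \ p.2, w i := by
          apply Finset.sum_le_sum
          intro i hi
          simp only [hw]
          rw [min_eq_right (hc2 i hi)]
          exact le_max_right _ _
        unfold LHS at h1 ⊢
        linarith
  have hobj : ∑ i, γ i * w i ≤ ∑ i, γ i * ustar i := by
    apply Finset.sum_le_sum
    intro i _
    rcases (hγ i).lt_or_gt with hneg | hpos
    · have hu1 : ustar i ≤ 1 := (hbox0 i).2 hneg
      have : ustar i ≤ w i := by
        simp only [hw]
        rw [min_eq_right hu1]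
        exact le_max_right _ _
      exact mul_le_mul_of_nonpos_left this (le_of_lt hneg)
    · have hu0 : 0 ≤ ustar i := (hbox0 i).1 (le_of_lt hpos)
      have : w i ≤ ustar i := by
        simp only [hw]
        exact max_le hu0 (min_le_right _ _)
      exact mul_le_mul_of_nonneg_left this (le_of_lt hpos)
  have hweq : w = ustar := by
    by_contra hne
    exact absurd (huniq w hwfeas hne) (not_lt.mpr hobj)
  have hbox : ∀ i, 0 ≤ ustar i ∧ ustar i ≤ 1 := by
    intro i
    rw [← hweq]
    exact hw01 i
  -- Step B: membership
  have hmem : ustar ∈ fundamentalPolytopeRows H J := by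
    refine ⟨hbox, ?_⟩
    intro j hj V hVsub hVodd
    rw [hJ] at hj
    obtain ⟨V₀, hV₀C, hact⟩ := hj
    obtain ⟨hV₀sub, hV₀odd⟩ := hC (j, V₀) hV₀C
    by_cases hVeq : V = V₀
    · rw [hVeq, hact]
    · have h2 := key H j V₀ V ustar hbox hV₀sub hVsub hV₀odd hVodd hVeq
      linarith
  refine ⟨hmem, ?_⟩
  -- Step C: uniqueness
  intro v hv hvne
  obtain ⟨hv01, hvpar⟩ := hv
  classical
  set S := C.filter (fun p => LHS H p.1 p.2 ustar ≠ 1) with hS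
  set T : Finset ℝ := insert (1/2) (S.image fun p => 1 - (LHS H p.1 p.2 ustar)⁻¹) with hT
  have hTne : T.Nonempty := ⟨1/2, Finset.mem_insert_self _ _⟩
  set ε := T.min' hTne with hε
  have hgt1 : ∀ p ∈ S, 1 < LHS H p.1 p.2 ustar := by
    intro p hp
    obtain ⟨hpC, hpne⟩ := Finset.mem_filter.mp hp
    exact lt_of_le_of_ne (hpar0 p hpC) (Ne.symm hpne)
  have hεpos : 0 < ε := by
    rw [hε]
    rw [Finset.lt_min'_iff]
    intro b hb
    rcases Finset.mem_insert.mp hb with hb | hb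
    · rw [hb]; norm_num
    · obtain ⟨p, hp, hpb⟩ := Finset.mem_image.mp hb
      have hL := hgt1 p hp
      have : (LHS H p.1 p.2 ustar)⁻¹ < 1 := by
        rw [inv_lt_one_iff₀]
        right; exact hL
      rw [← hpb]
      linarith
  have hεhalf : ε ≤ 1/2 := Finset.min'_le _ _ (Finset.mem_insert_self _ _)
  have hεle : ∀ p ∈ S, ε ≤ 1 - (LHS H p.1 p.2 ustar)⁻¹ := fun p hp =>
    Finset.min'_le _ _ (Finset.mem_insert_of_mem (Finset.mem_image_of_mem _ hp))
  set z : Fin n → ℝ := fun i => (1 - ε) * ustar i + ε * v i with hz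
  have hz01 : ∀ i, 0 ≤ z i ∧ z i ≤ 1 := by
    intro i
    have h1 := hbox i
    have h2 := hv01 i
    constructor
    · simp only [hz]
      have := mul_nonneg (by linarith : (0:ℝ) ≤ 1 - ε) h1.1
      have := mul_nonneg (le_of_lt hεpos) h2.1
      linarith
    · simp only [hz]
      have := mul_le_mul_of_nonneg_left h1.2 (by linarith : (0:ℝ) ≤ 1 - ε)
      have := mul_le_mul_of_nonneg_left h2.2 (le_of_lt hεpos)
      linarith
  have hzfeas : z ∈ feasible H γ C := by
    constructor
    · exact fun i => ⟨fun _ => (hz01 i).1, fun _ => (hz01 i).2⟩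
    · intro p hp
      have haff : LHS H p.1 p.2 z = (1 - ε) * LHS H p.1 p.2 ustar + ε * LHS H p.1 p.2 v := by
        rw [hz]
        exact LHS_affine H p.1 p.2 ustar v (1 - ε) ε (by ring)
      by_cases hact : LHS H p.1 p.2 ustar = 1
      · have hjJ : p.1 ∈ J := by
          rw [hJ]
          exact ⟨p.2, by simpa using hp, hact⟩
        have h2 := hvpar p.1 hjJ p.2 (hC p hp).1 (hC p hp).2
        rw [haff, hact]
        nlinarith
      · have hpS : p ∈ S := Finset.mem_filter.mpr ⟨hp, hact⟩
        have hL1 : 1 < LHS H p.1 p.2 ustar := hgt1 p hpS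
        have hLv0 : 0 ≤ LHS H p.1 p.2 v := LHS_nonneg H p.1 p.2 v hv01
        have h3 : (LHS H p.1 p.2 ustar)⁻¹ ≤ 1 - ε := by linarith [hεle p hpS]
        have h4 : (LHS H p.1 p.2 ustar)⁻¹ * LHS H p.1 p.2 ustar ≤
            (1 - ε) * LHS H p.1 p.2 ustar :=
          mul_le_mul_of_nonneg_right h3 (by linarith)
        rw [inv_mul_cancel₀ (by linarith : LHS H p.1 p.2 ustar ≠ 0)] at h4
        rw [haff]
        nlinarith [mul_nonneg (le_of_lt hεpos) hLv0]
  have hzne : z ≠ ustar := by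
    intro heq
    obtain ⟨i, hi⟩ := Function.ne_iff.mp hvne
    have h5 : (1 - ε) * ustar i + ε * v i = ustar i := by
      have := congrFun heq i
      simpa [hz] using this
    have h6 : ε * (v i - ustar i) = 0 := by linarith
    rcases mul_eq_zero.mp h6 with h | h
    · exact absurd h (ne_of_gt hεpos)
    · exact hi (by linarith)
  have hlt := huniq z hzfeas hzne
  have hsum : ∑ i, γ i * z i = (1 - ε) * ∑ i, γ i * ustar i + ε * ∑ i, γ i * v i := by
    rw [Finset.mul_sum, Finset.mul_sum, ← Finset.sum_add_distrib]
    exact Finset.sum_congr rfl fun i _ => by simp only [hz]; ring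
  rw [hsum] at hlt
  have h7 : ε * ∑ i, γ i * ustar i < ε * ∑ i, γ i * v i := by linarith
  exact (mul_lt_mul_iff_right₀ hεpos).mp h7
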